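/- Let l ≥ 2 be even and 0 ≤ s ≤ l with gcd(2s+1, l+1) = 1, and let b_{l,s} be the unique sequence from the existence-uniqueness result. Then for every integer n: b_{l,s}(n) = b_{l,l-s}(n) if n ≢ 0 (mod l+1), and b_{l,s}(n) = -b_{l,l-s}(n) if n ≡ 0 (mod l+1). -/

import Mathlib

/-- The defining conditions of the (l+1)-periodic sequence (b_{l,s}(n)). -/
def IsB (l s : ℕ) (b : ℤ → ℤ) : Prop :=
  (∀ n : ℤ, b n = 1 ∨ b n = -1) ∧
  (∀ n : ℤ, b (n + ((l : ℤ) + 1)) = b n) ∧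
  b 1 = 1 ∧
  (∀ n : ℤ, ¬ ((l : ℤ) + 1) ∣ n → b n = - b ((l : ℤ) + 1 - n)) ∧
  (∀ n : ℤ, b ((s : ℤ) - n) = b ((s : ℤ) + 1 + n))

/-- Congruent arguments give equal values for an (l+1)-periodic function. -/
lemma per_cong (L : ℤ) (h : ℤ → ℤ) (hper : ∀ n, h (n + L) = h n) :
    ∀ n m : ℤ, L ∣ (n - m) → h n = h m := by
  have key : ∀ k : ℤ, ∀ m, h (m + k * L) = h m := by
    intro k
    induction k using Int.induction_on with
    | zero => simp
    | succ i ih =>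
      intro m
      have e : m + ((i : ℤ) + 1) * L = (m + i * L) + L := by ring
      rw [e, hper, ih]
    | pred i ih =>
      intro m
      have e : (m + (-(i : ℤ) - 1) * L) + L = m + (-(i : ℤ)) * L := by ring
      calc h (m + (-(i : ℤ) - 1) * L) = h ((m + (-(i : ℤ) - 1) * L) + L) := (hper _).symm
        _ = h (m + (-(i : ℤ)) * L) := by rw [e]
        _ = h m := ih m
  intro n m hdvd
  obtain ⟨k, hk⟩ := hdvd
  have : n = m + k * L := by linarith
  rw [this, key]

/-- Uniqueness of sequences satisfying `IsB l t` when `2t+1` is invertible mod `l+1`. -/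
lemma isB_unique (l t : ℕ) (hu : IsUnit ((2 * t + 1 : ℕ) : ZMod (l + 1)))
    (f g : ℤ → ℤ) (hf : IsB l t f) (hg : IsB l t g) : ∀ n, f n = g n := by
  obtain ⟨hf1, hf2, hf3, hf4, hf5⟩ := hf
  obtain ⟨hg1, hg2, hg3, hg4, hg5⟩ := hg
  set L : ℤ := (l : ℤ) + 1 with hL
  -- the basic step relation
  have step : ∀ (h : ℤ → ℤ), (∀ n, h (n + L) = h n) →
      (∀ n, ¬ L ∣ n → h n = - h (L - n)) →
      (∀ n, h ((t : ℤ) - n) = h ((t : ℤ) + 1 + n)) →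
      ∀ m : ℤ, h (m + (2 * (t : ℤ) + 1)) = if L ∣ m then h m else - h m := by
    intro h hper hanti hpal m
    have h1 : h (-m) = h (m + (2 * (t : ℤ) + 1)) := by
      have := hpal ((t : ℤ) + m)
      have e1 : (t : ℤ) - ((t : ℤ) + m) = -m := by ring
      have e2 : (t : ℤ) + 1 + ((t : ℤ) + m) = m + (2 * (t : ℤ) + 1) := by ring
      rw [e1, e2] at this
      exact this
    split_ifs with hd
    · rw [← h1]
      exact per_cong L h hper (-m) m (by obtain ⟨k, hk⟩ := hd; exact ⟨-2 * k, by linarith⟩)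
    · rw [← h1]
      have h2 : h m = - h (L - m) := hanti m hd
      have h3 : h (L - m) = h (-m) := per_cong L h hper (L - m) (-m) ⟨1, by ring⟩
      linarith
  -- induction along the arithmetic progression 1 + j*(2t+1)
  have main : ∀ j : ℕ, f (1 + (j : ℤ) * (2 * (t : ℤ) + 1)) = g (1 + (j : ℤ) * (2 * (t : ℤ) + 1)) := by
    intro j
    induction j with
    | zero => simpa using hf3.trans hg3.symm
    | succ i ih =>
      have ef := step f hf2 hf4 hf5 (1 + (i : ℤ) * (2 * (t : ℤ) + 1))
      have eg := step g hg2 hg4 hg5 (1 + (i : ℤ) * (2 * (t : ℤ) + 1))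
      have e : 1 + ((i : ℕ) + 1 : ℕ) * (2 * (t : ℤ) + 1)
          = (1 + (i : ℤ) * (2 * (t : ℤ) + 1)) + (2 * (t : ℤ) + 1) := by push_cast; ring
      push_cast
      rw [show (1 : ℤ) + ((i : ℤ) + 1) * (2 * (t : ℤ) + 1)
          = (1 + (i : ℤ) * (2 * (t : ℤ) + 1)) + (2 * (t : ℤ) + 1) from by ring, ef, eg]
      split_ifs <;> rw [ih]
  -- now cover all residues
  intro n
  haveI : NeZero (l + 1) := ⟨Nat.succ_ne_zero l⟩
  set u := hu.unit with hudef
  set z : ZMod (l + 1) := (↑u⁻¹ : ZMod (l + 1)) * ((n : ZMod (l + 1)) - 1) with hz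
  set j : ℕ := z.val with hj
  have hcast : ((1 + (j : ℤ) * (2 * (t : ℤ) + 1) : ℤ) : ZMod (l + 1)) = ((n : ℤ) : ZMod (l + 1)) := by
    push_cast
    have hzj : ((j : ℕ) : ZMod (l + 1)) = z := by
      simp [hj, ZMod.natCast_val, ZMod.cast_id]
    rw [hzj, hz]
    have huval : ((2 * t + 1 : ℕ) : ZMod (l + 1)) = ↑u := hu.unit_spec.symm
    have : (2 * (t : ZMod (l + 1)) + 1) = ↑u := by
      rw [← huval]; push_cast; ring
    rw [this]
    have : (↑u⁻¹ : ZMod (l + 1)) * ((n : ZMod (l + 1)) - 1) * ↑u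
        = ((n : ZMod (l + 1)) - 1) * ((↑u⁻¹ : ZMod (l + 1)) * ↑u) := by ring
    rw [this, u.inv_mul]
    ring
  have hdvd : L ∣ n - (1 + (j : ℤ) * (2 * (t : ℤ) + 1)) := by
    have h0 : ((n - (1 + (j : ℤ) * (2 * (t : ℤ) + 1)) : ℤ) : ZMod (l + 1)) = 0 := by
      push_cast at hcast ⊢
      rw [sub_eq_zero]
      exact hcast.symm
    have := (ZMod.intCast_zmod_eq_zero_iff_dvd _ (l + 1)).mp h0
    simpa [hL] using this
  calc f n = f (1 + (j : ℤ) * (2 * (t : ℤ) + 1)) := per_cong L f hf2 _ _ hdvd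
    _ = g (1 + (j : ℤ) * (2 * (t : ℤ) + 1)) := main j
    _ = g n := (per_cong L g hg2 _ _ hdvd).symm

theorem stmt9 (l s : ℕ) (hleven : Even l) (hl : 2 ≤ l) (hs : s ≤ l)
    (hg : Nat.gcd (2 * s + 1) (l + 1) = 1)
    (b b' : ℤ → ℤ) (hb : IsB l s b) (hb' : IsB l (l - s) b') :
    ∀ n : ℤ, (¬ ((l : ℤ) + 1) ∣ n → b n = b' n) ∧
      (((l : ℤ) + 1) ∣ n → b n = - b' n) := by
  obtain ⟨hb1, hb2, hb3, hb4, hb5⟩ := hb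
  set L : ℤ := (l : ℤ) + 1 with hL
  have hL3 : (3 : ℤ) ≤ L := by rw [hL]; omega
  -- auxiliary facts about b
  have hneg : ∀ n : ℤ, ¬ L ∣ n → b (-n) = - b n := by
    intro n hn
    have hn' : ¬ L ∣ (-n) := fun h => hn (by simpa using h.neg_right)
    have h1 := hb4 (-n) hn'
    have h2 : b (L - -n) = b n := per_cong L b hb2 _ _ ⟨1, by ring⟩
    rw [h2] at h1
    linarith
  have hnegdvd : ∀ n : ℤ, L ∣ n → b (-n) = b n := by
    intro n hn
    obtain ⟨k, hk⟩ := hn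
    exact per_cong L b hb2 (-n) n ⟨-2 * k, by linarith⟩
  -- the candidate sequence c = -b(-·) satisfies IsB l (l - s)
  have hc : IsB l (l - s) (fun n => - b (-n)) := by
    refine ⟨?_, ?_, ?_, ?_, ?_⟩
    · intro n
      rcases hb1 (-n) with h | h <;> simp [h]
    · intro n
      have : b (-(n + L)) = b (-n) := per_cong L b hb2 _ _ ⟨-1, by ring⟩
      simp only []
      rw [show -(n + ((l:ℤ)+1)) = -(n + L) from by rw [hL], this]
    · have hnd : ¬ L ∣ (1 : ℤ) := by
        intro h
        have := Int.le_of_dvd one_pos h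
        omega
      simp only []
      rw [hneg 1 hnd, hb3]
      ring
    · intro n hn
      simp only []
      rw [hL] at *
      have e1 : b (-((l:ℤ) + 1 - n)) = b n := by
        have : b (-((l:ℤ) + 1 - n)) = b (n - ((l:ℤ)+1)) := by ring_nf
        rw [this]
        exact per_cong ((l:ℤ)+1) b hb2 _ _ ⟨-1, by ring⟩
      rw [e1, hneg n hn]
    · intro n
      have hssub : ((l - s : ℕ) : ℤ) = (l : ℤ) - (s : ℤ) := by
        push_cast [Nat.cast_sub hs]; ring
      simp only []
      rw [hssub]
      have e1 : b (-(((l:ℤ) - s) - n)) = b ((s : ℤ) + 1 + n) := by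
        have : -(((l:ℤ) - s) - n) = ((s:ℤ) + 1 + n) + (-1) * L := by rw [hL]; ring
        rw [this]
        exact per_cong L b hb2 _ _ ⟨-1, by ring⟩
      have e2 : b (-(((l:ℤ) - s) + 1 + n)) = b ((s : ℤ) - n) := by
        have : -(((l:ℤ) - s) + 1 + n) = ((s:ℤ) - n) + (-1) * L := by rw [hL]; ring
        rw [this]
        exact per_cong L b hb2 _ _ ⟨-1, by ring⟩
      rw [e1, e2, hb5 n]
  -- invertibility of 2(l-s)+1 mod l+1
  haveI : NeZero (l + 1) := ⟨Nat.succ_ne_zero l⟩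
  have hu : IsUnit ((2 * (l - s) + 1 : ℕ) : ZMod (l + 1)) := by
    have hsum : (2 * (l - s) + 1) + (2 * s + 1) = 2 * (l + 1) := by omega
    have hzero : ((2 * (l - s) + 1 : ℕ) : ZMod (l + 1)) + ((2 * s + 1 : ℕ) : ZMod (l + 1)) = 0 := by
      rw [← Nat.cast_add, hsum, Nat.cast_mul, ZMod.natCast_self, mul_zero]
    have hunit : IsUnit ((2 * s + 1 : ℕ) : ZMod (l + 1)) :=
      (ZMod.isUnit_iff_coprime _ _).mpr hg
    have : ((2 * (l - s) + 1 : ℕ) : ZMod (l + 1)) = -((2 * s + 1 : ℕ) : ZMod (l + 1)) := by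
      linear_combination hzero
    rw [this]
    exact hunit.neg
  -- uniqueness: b' = c
  have huniq : ∀ n, b' n = - b (-n) := isB_unique l (l - s) hu b' (fun n => - b (-n)) hb' hc
  intro n
  constructor
  · intro hn
    rw [huniq n, hneg n hn]
    ring
  · intro hn
    rw [huniq n, hnegdvd n hn]
    ring
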